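/- Let D ⊆ ℝⁿ be convex, let H = [l₁,u₁] × ⋯ × [l_n,u_n] be a (possibly unbounded) box, and let f : D → ℝ ∪ {∞} be convex, attaining its minimum over D at a point z ∈ D \ H. Suppose there are indices i < j such that z_k < l_k ≤ u_k for k = 1,…,i, z_k > u_k ≥ l_k for k = i+1,…,j, and l_k ≤ z_k ≤ u_k for k = j+1,…,n. Then the minimum of f over H ∩ D equals the minimum of f over I ∩ D, where I is the union of the faces of H obtained by fixing the k-th coordinate to l_k for k ≤ i and to u_k for i < k ≤ j. -/

import Mathlib

theorem stmt_5 (n : ℕ) (D : Set (Fin n → ℝ)) (hD : Convex ℝ D)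
    (l u : Fin n → EReal) (f : (Fin n → ℝ) → EReal)
    (hconv : ∀ x ∈ D, ∀ y ∈ D, ∀ a b : ℝ, 0 ≤ a → 0 ≤ b → a + b = 1 →
      f (a • x + b • y) ≤ (a : EReal) * f x + (b : EReal) * f y)
    (H : Set (Fin n → ℝ))
    (hH : H = {x | ∀ k, l k ≤ (x k : EReal) ∧ (x k : EReal) ≤ u k})
    (z : Fin n → ℝ) (hzD : z ∈ D) (hzH : z ∉ H)
    (hzmin : ∀ w ∈ D, f z ≤ f w)
    (i j : ℕ) (hij : i < j) (hjn : j ≤ n)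
    (hlow : ∀ k : Fin n, (k : ℕ) < i → (z k : EReal) < l k ∧ l k ≤ u k)
    (hhigh : ∀ k : Fin n, i ≤ (k : ℕ) → (k : ℕ) < j → u k < (z k : EReal) ∧ l k ≤ u k)
    (hmid : ∀ k : Fin n, j ≤ (k : ℕ) → l k ≤ (z k : EReal) ∧ (z k : EReal) ≤ u k)
    (I : Set (Fin n → ℝ))
    (hI : I = (⋃ k : Fin n, ⋃ _ : (k : ℕ) < i, {x ∈ H | (x k : EReal) = l k}) ∪
              (⋃ k : Fin n, ⋃ _ : i ≤ (k : ℕ) ∧ (k : ℕ) < j, {x ∈ H | (x k : EReal) = u k})) :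
    sInf (f '' (H ∩ D)) = sInf (f '' (I ∩ D)) := by
  have hn0 : 0 < n := lt_of_lt_of_le (Nat.zero_lt_of_lt hij) hjn
  have h0j : 0 < j := Nat.zero_lt_of_lt hij
  have hIH : I ⊆ H := by
    rw [hI]
    rintro x (hx | hx) <;> simp only [Set.mem_iUnion] at hx <;>
      obtain ⟨k, _, hx, _⟩ := hx <;> exact hx
  apply le_antisymm
  · exact sInf_le_sInf (Set.image_mono (Set.inter_subset_inter_left _ hIH))
  · apply le_sInf
    rintro a ⟨x, ⟨hxH, hxD⟩, rfl⟩
    rw [hH] at hxH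
    simp only [Set.mem_setOf_eq] at hxH
    -- finiteness of the relevant bounds
    set L : Fin n → ℝ := fun k => (l k).toReal with hL
    set U : Fin n → ℝ := fun k => (u k).toReal with hU
    have hlfin : ∀ k : Fin n, (k : ℕ) < i → l k = ((L k : ℝ) : EReal) := by
      intro k hk
      refine (EReal.coe_toReal ?_ ?_).symm
      · exact ne_top_of_le_ne_top (EReal.coe_ne_top (x k)) (hxH k).1
      · exact ne_bot_of_gt (hlow k hk).1
    have hufin : ∀ k : Fin n, i ≤ (k : ℕ) → (k : ℕ) < j → u k = ((U k : ℝ) : EReal) := by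
      intro k hk1 hk2
      refine (EReal.coe_toReal ?_ ?_).symm
      · exact ne_top_of_lt (hhigh k hk1 hk2).1
      · exact ne_bot_of_le_ne_bot (EReal.coe_ne_bot (x k)) (hxH k).2
    have hzL : ∀ k : Fin n, (k : ℕ) < i → z k < L k := by
      intro k hk
      have := (hlow k hk).1
      rw [hlfin k hk] at this
      exact_mod_cast this
    have hLx : ∀ k : Fin n, (k : ℕ) < i → L k ≤ x k := by
      intro k hk
      have := (hxH k).1
      rw [hlfin k hk] at this
      exact_mod_cast this
    have hUz : ∀ k : Fin n, i ≤ (k : ℕ) → (k : ℕ) < j → U k < z k := by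
      intro k hk1 hk2
      have := (hhigh k hk1 hk2).1
      rw [hufin k hk1 hk2] at this
      exact_mod_cast this
    have hxU : ∀ k : Fin n, i ≤ (k : ℕ) → (k : ℕ) < j → x k ≤ U k := by
      intro k hk1 hk2
      have := (hxH k).2
      rw [hufin k hk1 hk2] at this
      exact_mod_cast this
    -- the step sizes
    set tf : Fin n → ℝ := fun k =>
      if (k : ℕ) < i then (x k - L k) / (x k - z k) else (U k - x k) / (z k - x k) with htf
    set S : Finset (Fin n) := Finset.univ.filter (fun k => (k : ℕ) < j) with hSdef
    have hmemS : ∀ k : Fin n, k ∈ S ↔ (k : ℕ) < j := by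
      intro k; simp [hSdef]
    have hS : S.Nonempty := ⟨⟨0, hn0⟩, (hmemS _).2 h0j⟩
    set t : ℝ := S.inf' hS tf with ht
    have htk : ∀ k ∈ S, t ≤ tf k := fun k hk => Finset.inf'_le tf hk
    have htf01 : ∀ k ∈ S, 0 ≤ tf k ∧ tf k ≤ 1 := by
      intro k hk
      have hkj : (k : ℕ) < j := (hmemS k).1 hk
      by_cases hki : (k : ℕ) < i
      · have h1 := hzL k hki
        have h2 := hLx k hki
        have hd : 0 < x k - z k := by linarith
        simp only [htf, if_pos hki]
        constructor
        · exact div_nonneg (by linarith) hd.le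
        · rw [div_le_one hd]; linarith
      · push_neg at hki
        have h1 := hUz k hki hkj
        have h2 := hxU k hki hkj
        have hd : 0 < z k - x k := by linarith
        simp only [htf, if_neg (not_lt.2 hki)]
        constructor
        · exact div_nonneg (by linarith) hd.le
        · rw [div_le_one hd]; linarith
    have ht0 : 0 ≤ t := Finset.le_inf' hS tf fun k hk => (htf01 k hk).1
    have ht1 : t ≤ 1 := le_trans (htk _ ((hmemS ⟨0, hn0⟩).2 h0j))
      (htf01 _ ((hmemS ⟨0, hn0⟩).2 h0j)).2
    set y : Fin n → ℝ := (1 - t) • x + t • z with hy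
    have hyk : ∀ k, y k = (1 - t) * x k + t * z k := by
      intro k; simp [hy, Pi.add_apply, Pi.smul_apply, smul_eq_mul]
    have hyD : y ∈ D := hD hxD hzD (by linarith) ht0 (by ring)
    -- y ∈ H
    have hyH : ∀ k : Fin n, l k ≤ (y k : EReal) ∧ (y k : EReal) ≤ u k := by
      intro k
      by_cases hki : (k : ℕ) < i
      · have h1 := hzL k hki
        have h2 := hLx k hki
        have hd : 0 < x k - z k := by linarith
        have hkj : k ∈ S := (hmemS k).2 (lt_of_lt_of_le hki hij.le)
        have htle : t ≤ (x k - L k) / (x k - z k) := by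
          simpa only [htf, if_pos hki] using htk k hkj
        have hmul : t * (x k - z k) ≤ x k - L k := by
          rw [← le_div_iff₀ hd]; exact htle
        constructor
        · rw [hlfin k hki, EReal.coe_le_coe_iff, hyk k]; nlinarith
        · have hylex : y k ≤ x k := by
            rw [hyk k]
            nlinarith [mul_nonneg ht0 hd.le]
          exact le_trans (EReal.coe_le_coe_iff.2 hylex) (hxH k).2
      · push_neg at hki
        by_cases hkj : (k : ℕ) < j
        · have h1 := hUz k hki hkj
          have h2 := hxU k hki hkj
          have hd : 0 < z k - x k := by linarith
          have hkS : k ∈ S := (hmemS k).2 hkj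
          have htle : t ≤ (U k - x k) / (z k - x k) := by
            simpa only [htf, if_neg (not_lt.2 hki)] using htk k hkS
          have hmul : t * (z k - x k) ≤ U k - x k := by
            rw [← le_div_iff₀ hd]; exact htle
          constructor
          · have hxley : x k ≤ y k := by
              rw [hyk k]; nlinarith [mul_nonneg ht0 hd.le]
            exact le_trans (hxH k).1 (EReal.coe_le_coe_iff.2 hxley)
          · rw [hufin k hki hkj, EReal.coe_le_coe_iff, hyk k]; nlinarith
        · push_neg at hkj
          have hm := hmid k hkj
          constructor
          · have hmin : min (x k) (z k) ≤ y k := by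
              rw [hyk k]
              nlinarith [min_le_left (x k) (z k), min_le_right (x k) (z k),
                mul_nonneg (by linarith : (0:ℝ) ≤ 1 - t) (sub_nonneg.2 (min_le_left (x k) (z k))),
                mul_nonneg ht0 (sub_nonneg.2 (min_le_right (x k) (z k)))]
            have : l k ≤ ((min (x k) (z k) : ℝ) : EReal) := by
              rcases min_choice (x k) (z k) with h | h <;> rw [h]
              · exact (hxH k).1
              · exact hm.1
            exact le_trans this (EReal.coe_le_coe_iff.2 hmin)
          · have hmax : y k ≤ max (x k) (z k) := by
              rw [hyk k]
              nlinarith [le_max_left (x k) (z k), le_max_right (x k) (z k),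
                mul_nonneg (by linarith : (0:ℝ) ≤ 1 - t) (sub_nonneg.2 (le_max_left (x k) (z k))),
                mul_nonneg ht0 (sub_nonneg.2 (le_max_right (x k) (z k)))]
            have : ((max (x k) (z k) : ℝ) : EReal) ≤ u k := by
              rcases max_choice (x k) (z k) with h | h <;> rw [h]
              · exact (hxH k).2
              · exact hm.2
            exact le_trans (EReal.coe_le_coe_iff.2 hmax) this
    have hyH' : y ∈ H := by rw [hH]; exact hyH
    -- y ∈ I
    obtain ⟨k0, hk0S, hk0⟩ := Finset.exists_mem_eq_inf' hS tf
    have hk0j : (k0 : ℕ) < j := (hmemS k0).1 hk0S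
    have hyI : y ∈ I := by
      rw [hI]
      by_cases hki : (k0 : ℕ) < i
      · left
        simp only [Set.mem_iUnion]
        refine ⟨k0, hki, hyH', ?_⟩
        have h1 := hzL k0 hki
        have hd : x k0 - z k0 ≠ 0 := by have := hLx k0 hki; intro h; linarith [h1, this]
        have : y k0 = L k0 := by
          rw [hyk k0, ht, hk0, htf]
          simp only [if_pos hki]
          field_simp
          ring
        rw [this, hlfin k0 hki]
      · push_neg at hki
        right
        simp only [Set.mem_iUnion]
        refine ⟨k0, ⟨hki, hk0j⟩, hyH', ?_⟩
        have h1 := hUz k0 hki hk0j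
        have hd : z k0 - x k0 ≠ 0 := by have := hxU k0 hki hk0j; intro h; linarith
        have : y k0 = U k0 := by
          rw [hyk k0, ht, hk0, htf]
          simp only [if_neg (not_lt.2 hki)]
          field_simp
          ring
        rw [this, hufin k0 hki hk0j]
    -- f y ≤ f x
    have hfy : f y ≤ f x := by
      have h1 := hconv x hxD z hzD (1 - t) t (by linarith) ht0 (by ring)
      have h2 : (t : EReal) * f z ≤ (t : EReal) * f x :=
        mul_le_mul_of_nonneg_left (hzmin x hxD) (by exact_mod_cast ht0)
      have h3 : ((1 - t : ℝ) : EReal) * f x + (t : EReal) * f x = f x := by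
        rw [← EReal.right_distrib_of_nonneg (by exact_mod_cast (by linarith : (0:ℝ) ≤ 1 - t))
          (by exact_mod_cast ht0), ← EReal.coe_add]
        norm_num
      calc f y ≤ ((1 - t : ℝ) : EReal) * f x + (t : EReal) * f z := h1
        _ ≤ ((1 - t : ℝ) : EReal) * f x + (t : EReal) * f x := add_le_add_right h2 _
        _ = f x := h3
    exact le_trans (sInf_le ⟨y, ⟨hyI, hyD⟩, rfl⟩) hfy
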